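/- Let G be a free nilpotent group of class 3 on two generators x, y. Let v = [[y,x],y] ∈ Z(G). Then: (a) ⟨x⟩^G = ⟨xv⟩^G, (b) x has infinite order modulo [G,G], and (c) there is no w ∈ G with [x,w] = v. In particular, G does not have the Magnus property. -/

import Mathlib

def MagnusProperty (G : Type*) [Group G] : Prop :=
  ∀ g h : G, Subgroup.normalClosure {g} = Subgroup.normalClosure {h} →
    IsConj g h ∨ IsConj g h⁻¹

/-- The free nilpotent group of class 3 on two generators:
`F/γ₄(F)` where `F` is the free group on two generators.
(`lowerCentralSeries F 3 = γ₄(F)` in Mathlib's indexing.) -/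
abbrev FreeNilpClass3Rank2 : Type :=
  FreeGroup (Fin 2) ⧸ Subgroup.lowerCentralSeries (⊤ : Subgroup (FreeGroup (Fin 2))) 3

/-! ### A concrete model: unitriangular 4×4 integer matrices -/

/-- Entries of a unitriangular 4×4 integer matrix:
`a = m₁₂, b = m₁₃, c = m₁₄, d = m₂₃, e = m₂₄, f = m₃₄`. -/
@[ext]
structure UT4 where
  a : ℤ
  b : ℤ
  c : ℤ
  d : ℤ
  e : ℤ
  f : ℤ
deriving DecidableEq

namespace UT4

instance : Mul UT4 :=
  ⟨fun m n => ⟨m.a + n.a, m.b + n.b + m.a * n.d, m.c + n.c + m.a * n.e + m.b * n.f,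
    m.d + n.d, m.e + n.e + m.d * n.f, m.f + n.f⟩⟩

instance : One UT4 := ⟨⟨0, 0, 0, 0, 0, 0⟩⟩

instance : Inv UT4 :=
  ⟨fun m => ⟨-m.a, -m.b + m.a * m.d, -m.c + m.a * m.e + m.b * m.f - m.a * m.d * m.f,
    -m.d, -m.e + m.d * m.f, -m.f⟩⟩

@[simp] lemma mul_a (m n : UT4) : (m * n).a = m.a + n.a := rfl
@[simp] lemma mul_b (m n : UT4) : (m * n).b = m.b + n.b + m.a * n.d := rfl
@[simp] lemma mul_c (m n : UT4) : (m * n).c = m.c + n.c + m.a * n.e + m.b * n.f := rfl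
@[simp] lemma mul_d (m n : UT4) : (m * n).d = m.d + n.d := rfl
@[simp] lemma mul_e (m n : UT4) : (m * n).e = m.e + n.e + m.d * n.f := rfl
@[simp] lemma mul_f (m n : UT4) : (m * n).f = m.f + n.f := rfl
@[simp] lemma one_a : (1 : UT4).a = 0 := rfl
@[simp] lemma one_b : (1 : UT4).b = 0 := rfl
@[simp] lemma one_c : (1 : UT4).c = 0 := rfl
@[simp] lemma one_d : (1 : UT4).d = 0 := rfl
@[simp] lemma one_e : (1 : UT4).e = 0 := rfl
@[simp] lemma one_f : (1 : UT4).f = 0 := rfl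
@[simp] lemma inv_a (m : UT4) : (m⁻¹).a = -m.a := rfl
@[simp] lemma inv_b (m : UT4) : (m⁻¹).b = -m.b + m.a * m.d := rfl
@[simp] lemma inv_c (m : UT4) :
    (m⁻¹).c = -m.c + m.a * m.e + m.b * m.f - m.a * m.d * m.f := rfl
@[simp] lemma inv_d (m : UT4) : (m⁻¹).d = -m.d := rfl
@[simp] lemma inv_e (m : UT4) : (m⁻¹).e = -m.e + m.d * m.f := rfl
@[simp] lemma inv_f (m : UT4) : (m⁻¹).f = -m.f := rfl

instance : Group UT4 where
  mul_assoc := by intros; ext <;> simp <;> ring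
  one_mul := by intros; ext <;> simp
  mul_one := by intros; ext <;> simp
  inv_mul_cancel := by intros; ext <;> simp <;> ring

/-- The image of the first generator: `I + E₁₂`. -/
def X : UT4 := ⟨1, 0, 0, 0, 0, 0⟩

/-- The image of the second generator: `I + E₂₃ + E₃₄`. -/
def Y : UT4 := ⟨0, 0, 0, 1, 0, 1⟩

/-- Matrices with zero super-diagonal; contains every commutator. -/
def H1 : Subgroup UT4 where
  carrier := {m | m.a = 0 ∧ m.d = 0 ∧ m.f = 0}
  one_mem' := ⟨rfl, rfl, rfl⟩
  mul_mem' := by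
    rintro p q ⟨h1, h2, h3⟩ ⟨h4, h5, h6⟩
    refine ⟨?_, ?_, ?_⟩ <;> simp [h1, h2, h3, h4, h5, h6]
  inv_mem' := by
    rintro p ⟨h1, h2, h3⟩
    refine ⟨?_, ?_, ?_⟩ <;> simp [h1, h2, h3]

/-- The subgroup where the generated group lives: it records the relations
`m₃₄ = m₂₃` and `2·m₂₄ = m₂₃(m₂₃-1)` satisfied by every word in `X, Y`. -/
def S : Subgroup UT4 where
  carrier := {m | m.f = m.d ∧ 2 * m.e = m.d * (m.d - 1)}
  one_mem' := ⟨rfl, by norm_num⟩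
  mul_mem' := by
    rintro p q ⟨h1, h2⟩ ⟨h3, h4⟩
    refine ⟨?_, ?_⟩
    · simp [h1, h3]
    · simp only [mul_e, mul_d]
      linear_combination h2 + h4 + 2 * p.d * h3
  inv_mem' := by
    rintro p ⟨h1, h2⟩
    refine ⟨?_, ?_⟩
    · simp [h1]
    · simp only [inv_e, inv_d]
      linear_combination -h2 + 2 * p.d * h1

lemma X_mem_S : X ∈ S := ⟨rfl, by norm_num [X]⟩
lemma Y_mem_S : Y ∈ S := ⟨rfl, by norm_num [Y]⟩

lemma lcs_one_le_H1 : Subgroup.lowerCentralSeries (⊤ : Subgroup UT4) 1 ≤ H1 := by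
  rw [Subgroup.top_lowerCentralSeries_one, commutator_def]
  refine Subgroup.commutator_le.mpr fun g _ h _ => ?_
  refine ⟨?_, ?_, ?_⟩ <;> simp [commutatorElement_def] <;> ring

lemma lcs_two_le_center : Subgroup.lowerCentralSeries (⊤ : Subgroup UT4) 2 ≤ Subgroup.center UT4 := by
  have h2 : Subgroup.lowerCentralSeries (⊤ : Subgroup UT4) 2 = ⁅Subgroup.lowerCentralSeries (⊤ : Subgroup UT4) 1, (⊤ : Subgroup UT4)⁆ :=
    Subgroup.lowerCentralSeries_succ _ 1
  rw [h2]
  refine Subgroup.commutator_le.mpr fun g hg h _ => ?_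
  obtain ⟨e1, e2, e3⟩ := lcs_one_le_H1 hg
  rw [Subgroup.mem_center_iff]
  intro z
  ext <;> simp [commutatorElement_def, e1, e2, e3] <;> ring

lemma lcs_three_eq_bot : Subgroup.lowerCentralSeries (⊤ : Subgroup UT4) 3 = ⊥ :=
  Subgroup.lowerCentralSeries_succ_eq_bot _ lcs_two_le_center

end UT4

open UT4

/-- The homomorphism from the free group on two generators to `UT4`. -/
noncomputable def psi : FreeGroup (Fin 2) →* UT4 := FreeGroup.lift ![X, Y]

@[simp] lemma psi_of0 : psi (FreeGroup.of 0) = X := by simp [psi]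
@[simp] lemma psi_of1 : psi (FreeGroup.of 1) = Y := by simp [psi]

/-- The same homomorphism, but landing in the subgroup `S`. -/
noncomputable def psiS : FreeGroup (Fin 2) →* S :=
  FreeGroup.lift ![⟨X, X_mem_S⟩, ⟨Y, Y_mem_S⟩]

lemma subtype_comp_psiS : S.subtype.comp psiS = psi := by
  refine FreeGroup.ext_hom _ _ fun i => ?_
  fin_cases i <;> simp [psiS, psi]

lemma psi_mem_S (g : FreeGroup (Fin 2)) : psi g ∈ S := by
  rw [← subtype_comp_psiS]
  exact (psiS g).2

lemma lcs_le_ker : Subgroup.lowerCentralSeries (⊤ : Subgroup (FreeGroup (Fin 2))) 3 ≤ psi.ker := by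
  intro g hg
  have h1 : psi g ∈ Subgroup.map psi (Subgroup.lowerCentralSeries (⊤ : Subgroup (FreeGroup (Fin 2))) 3) :=
    Subgroup.mem_map_of_mem _ hg
  have h2 := Subgroup.lowerCentralSeries.map psi 3 h1
  rw [lcs_three_eq_bot, Subgroup.mem_bot] at h2
  exact h2

/-- The induced homomorphism from the free nilpotent group of class 3. -/
noncomputable def phi : FreeNilpClass3Rank2 →* UT4 :=
  QuotientGroup.lift _ psi lcs_le_ker

@[simp] lemma phi_mk (g : FreeGroup (Fin 2)) : phi (QuotientGroup.mk g) = psi g := rfl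

/-- The abelianized first coordinate. -/
def chi : UT4 →* Multiplicative ℤ where
  toFun m := Multiplicative.ofAdd m.a
  map_one' := rfl
  map_mul' _ _ := rfl

@[simp] lemma chi_apply (m : UT4) : chi m = Multiplicative.ofAdd m.a := rfl

/-! ### Words in the free group -/

/-- The word `[y,x] = y⁻¹x⁻¹yx`. -/
def uw : FreeGroup (Fin 2) :=
  (FreeGroup.of 1)⁻¹ * (FreeGroup.of 0)⁻¹ * FreeGroup.of 1 * FreeGroup.of 0

/-- The word `[[y,x],y]`. -/
def vw : FreeGroup (Fin 2) := uw⁻¹ * (FreeGroup.of 1)⁻¹ * uw * FreeGroup.of 1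

open scoped commutatorElement in
lemma uw_mem : uw ∈ Subgroup.lowerCentralSeries (⊤ : Subgroup (FreeGroup (Fin 2))) 1 := by
  rw [Subgroup.top_lowerCentralSeries_one, commutator_def]
  have huw : uw = ⁅((FreeGroup.of 1 : FreeGroup (Fin 2)))⁻¹, ((FreeGroup.of 0 : FreeGroup (Fin 2)))⁻¹⁆ := by
    rw [commutatorElement_def]; simp [uw]
  rw [huw]
  exact Subgroup.commutator_mem_commutator (Subgroup.mem_top _) (Subgroup.mem_top _)

open scoped commutatorElement in
lemma vw_mem : vw ∈ Subgroup.lowerCentralSeries (⊤ : Subgroup (FreeGroup (Fin 2))) 2 := by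
  have h2 : Subgroup.lowerCentralSeries (⊤ : Subgroup (FreeGroup (Fin 2))) 2 =
      ⁅Subgroup.lowerCentralSeries (⊤ : Subgroup (FreeGroup (Fin 2))) 1, (⊤ : Subgroup (FreeGroup (Fin 2)))⁆ :=
    Subgroup.lowerCentralSeries_succ _ 1
  have hvw : vw = ⁅uw⁻¹, ((FreeGroup.of 1 : FreeGroup (Fin 2)))⁻¹⁆ := by
    rw [commutatorElement_def]; simp [vw]
  rw [h2, hvw]
  exact Subgroup.commutator_mem_commutator (inv_mem uw_mem) (Subgroup.mem_top _)

lemma psi_vw : psi vw = ⟨0, 0, -1, 0, 0, 0⟩ := by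
  simp only [vw, uw, map_mul, map_inv, psi_of0, psi_of1]
  decide

/-! ### Elements of the free nilpotent group -/

/-- Abbreviations. -/
noncomputable def xG : FreeNilpClass3Rank2 := QuotientGroup.mk (FreeGroup.of 0)
noncomputable def yG : FreeNilpClass3Rank2 := QuotientGroup.mk (FreeGroup.of 1)
noncomputable def vG : FreeNilpClass3Rank2 :=
  (yG⁻¹ * xG⁻¹ * yG * xG)⁻¹ * yG⁻¹ * (yG⁻¹ * xG⁻¹ * yG * xG) * yG

lemma vG_eq_mk : vG = QuotientGroup.mk vw := by
  simp only [vG, xG, yG, vw, uw, ← QuotientGroup.mk_mul, ← QuotientGroup.mk_inv]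

lemma phi_xG : phi xG = X := by simp only [xG]; exact (phi_mk _).trans psi_of0
lemma phi_vG : phi vG = ⟨0, 0, -1, 0, 0, 0⟩ := by
  rw [vG_eq_mk, phi_mk, psi_vw]

open scoped commutatorElement in
/-- Part: `v` is central. -/
lemma vG_central : vG ∈ Subgroup.center FreeNilpClass3Rank2 := by
  rw [Subgroup.mem_center_iff]
  intro g
  obtain ⟨h, rfl⟩ := QuotientGroup.mk_surjective g
  rw [vG_eq_mk, ← QuotientGroup.mk_mul, ← QuotientGroup.mk_mul, QuotientGroup.eq]
  have key : (h * vw)⁻¹ * (vw * h) = ⁅vw⁻¹, h⁻¹⁆ := by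
    rw [commutatorElement_def]; group
  rw [key]
  have h3 : Subgroup.lowerCentralSeries (⊤ : Subgroup (FreeGroup (Fin 2))) 3 =
      ⁅Subgroup.lowerCentralSeries (⊤ : Subgroup (FreeGroup (Fin 2))) 2, (⊤ : Subgroup (FreeGroup (Fin 2)))⁆ :=
    Subgroup.lowerCentralSeries_succ _ 2
  rw [h3]
  exact Subgroup.commutator_mem_commutator (inv_mem vw_mem) (Subgroup.mem_top _)

/-- Conjugating-commutator membership helper. -/
lemma conj_in {G : Type*} [Group G] (N : Subgroup G) [N.Normal] {s : G} (hs : s ∈ N)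
    (p : G) : p⁻¹ * s * p ∈ N := by
  have := Subgroup.Normal.conj_mem ‹N.Normal› s hs p⁻¹
  simpa using this

lemma comm_mem {G : Type*} [Group G] (N : Subgroup G) [N.Normal] {s : G} (hs : s ∈ N)
    (p : G) : p⁻¹ * s⁻¹ * p * s ∈ N :=
  mul_mem (conj_in N (inv_mem hs) p) hs

/-- Commutator with a product by a central element. -/
lemma conj_mul_central {G : Type*} [Group G] {v : G} (hv : ∀ g, g * v = v * g) (p s : G) :
    p⁻¹ * (s * v)⁻¹ * p * (s * v) = p⁻¹ * s⁻¹ * p * s := by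
  have h1 : ∀ g : G, v⁻¹ * g = g * v⁻¹ := fun g => ((Commute.inv_right (hv g)).symm).eq
  simp only [mul_inv_rev, mul_assoc, h1, mul_inv_cancel_left, inv_mul_cancel_left,
    mul_inv_cancel, mul_one]

/-- Part (a): equality of normal closures. -/
lemma closures_eq :
    Subgroup.normalClosure {xG} = Subgroup.normalClosure {xG * vG} := by
  have hvc : ∀ g, g * vG = vG * g := Subgroup.mem_center_iff.mp vG_central
  apply le_antisymm
  · apply Subgroup.normalClosure_le_normal
    rw [Set.singleton_subset_iff]
    -- show xG ∈ normalClosure {xG * vG}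
    have hs : xG * vG ∈ Subgroup.normalClosure {xG * vG} :=
      Subgroup.subset_normalClosure rfl
    have ht : yG⁻¹ * (xG * vG)⁻¹ * yG * (xG * vG) ∈ Subgroup.normalClosure {xG * vG} :=
      comm_mem _ hs yG
    rw [conj_mul_central hvc] at ht
    -- ht : uG ∈ normalClosure {xG * vG}
    have hv : vG ∈ Subgroup.normalClosure {xG * vG} := by
      have heq : vG = (yG⁻¹ * xG⁻¹ * yG * xG)⁻¹ *
          (yG⁻¹ * (yG⁻¹ * xG⁻¹ * yG * xG) * yG) := by
        rw [vG]; group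
      rw [heq]
      exact mul_mem (inv_mem ht) (conj_in _ ht yG)
    simpa using mul_mem hs (inv_mem hv)
  · apply Subgroup.normalClosure_le_normal
    rw [Set.singleton_subset_iff]
    have hx : xG ∈ Subgroup.normalClosure {xG} := Subgroup.subset_normalClosure rfl
    have hu : yG⁻¹ * xG⁻¹ * yG * xG ∈ Subgroup.normalClosure {xG} := comm_mem _ hx yG
    have hv : vG ∈ Subgroup.normalClosure {xG} := by
      have heq : vG = (yG⁻¹ * xG⁻¹ * yG * xG)⁻¹ *
          (yG⁻¹ * (yG⁻¹ * xG⁻¹ * yG * xG) * yG) := by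
        rw [vG]; group
      rw [heq]
      exact mul_mem (inv_mem hu) (conj_in _ hu yG)
    exact mul_mem hx hv

/-- Part (b): `x` has infinite order modulo the commutator subgroup. -/
lemma part_b : ∀ n : ℤ, n ≠ 0 → xG ^ n ∉ commutator FreeNilpClass3Rank2 := by
  intro n hn hmem
  have hker : commutator FreeNilpClass3Rank2 ≤ (chi.comp phi).ker := by
    rw [commutator_def]
    refine Subgroup.commutator_le.mpr fun p _ q _ => ?_
    rw [MonoidHom.mem_ker, map_commutatorElement]
    exact commutatorElement_eq_one_iff_commute.mpr (Commute.all _ _)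
  have h1 : (chi.comp phi) (xG ^ n) = 1 := hker hmem
  rw [map_zpow] at h1
  have h2 : (chi.comp phi) xG = Multiplicative.ofAdd 1 := by
    rw [MonoidHom.comp_apply, phi_xG]; rfl
  rw [h2] at h1
  have h3 : (Multiplicative.ofAdd (1 : ℤ)) ^ n = Multiplicative.ofAdd n := by
    rw [← ofAdd_zsmul]; norm_num
  rw [h3] at h1
  exact hn (by simpa using h1)

/-- Part (c): `v` is not a commutator `[x, w]`. -/
lemma part_c : ∀ w : FreeNilpClass3Rank2, xG⁻¹ * w⁻¹ * xG * w ≠ vG := by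
  intro w hw
  obtain ⟨g, rfl⟩ := QuotientGroup.mk_surjective w
  have h := congrArg phi hw
  rw [map_mul, map_mul, map_mul, map_inv, map_inv, phi_xG, phi_mk, phi_vG] at h
  obtain ⟨h1, h2⟩ := psi_mem_S g
  set m := psi g with hm
  -- h : X⁻¹ * m⁻¹ * X * m = ⟨0,0,-1,0,0,0⟩
  have hb := congrArg UT4.b h
  have hc := congrArg UT4.c h
  simp [X] at hb hc
  -- hb should give m.d = 0, hc gives m.e = -1 (modulo normalization)
  ring_nf at hb hc
  -- finish with the S-relations
  rw [hb] at h2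
  norm_num at h2
  omega

/-- The main theorem. -/
theorem free_nilpotent_class_three_not_magnus :
    let x : FreeNilpClass3Rank2 := QuotientGroup.mk (FreeGroup.of 0)
    let y : FreeNilpClass3Rank2 := QuotientGroup.mk (FreeGroup.of 1)
    -- left-normed commutator, paper convention [a,b] = a⁻¹b⁻¹ab
    let v : FreeNilpClass3Rank2 :=
      (y⁻¹ * x⁻¹ * y * x)⁻¹ * y⁻¹ * (y⁻¹ * x⁻¹ * y * x) * y
    v ∈ Subgroup.center FreeNilpClass3Rank2 ∧
    Subgroup.normalClosure {x} = Subgroup.normalClosure {x * v} ∧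
    (∀ n : ℤ, n ≠ 0 → x ^ n ∉ commutator FreeNilpClass3Rank2) ∧
    (∀ w : FreeNilpClass3Rank2, x⁻¹ * w⁻¹ * x * w ≠ v) ∧
    ¬ MagnusProperty FreeNilpClass3Rank2 := by
  intro x y v
  have hx : x = xG := rfl
  have hy : y = yG := rfl
  have hv : v = vG := rfl
  refine ⟨hv ▸ vG_central, by rw [hx, hv]; exact closures_eq, hx ▸ part_b,
    by rw [hx, hv]; exact part_c, ?_⟩
  intro hMP
  rcases hMP x (x * v) (by rw [hx, hv]; exact closures_eq) with hconj | hconj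
  · obtain ⟨c, hc⟩ := isConj_iff.mp hconj
    apply part_c c⁻¹
    rw [inv_inv, ← hx, ← hv]
    calc x⁻¹ * c * x * c⁻¹ = x⁻¹ * (c * x * c⁻¹) := by group
      _ = x⁻¹ * (x * v) := by rw [hc]
      _ = v := by group
  · obtain ⟨c, hc⟩ := isConj_iff.mp hconj
    have h := congrArg (chi.comp phi) hc
    have h2 : (chi.comp phi) x = Multiplicative.ofAdd 1 := by
      rw [hx, MonoidHom.comp_apply, phi_xG]; rfl
    have h3 : (chi.comp phi) v = 1 := by
      rw [hv, MonoidHom.comp_apply, phi_vG]; rfl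
    rw [map_mul, map_mul, map_inv, map_inv, map_mul, h2, h3] at h
    rw [mul_comm ((chi.comp phi) c) (Multiplicative.ofAdd 1), mul_inv_cancel_right] at h
    exact absurd h (by decide)
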